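/- Let C be a category of fibrant objects: C has finite products and a terminal object, and is equipped with classes of morphisms called weak equivalences (containing all isomorphisms and satisfying 2-out-of-3) and fibrations (containing all isomorphisms, closed under composition and under base change along arbitrary morphisms, with all such pullbacks existing), such that trivial fibrations (fibrations which are weak equivalences) are stable under base change, every object is fibrant (the map to the terminal object is a fibration), and every object X has a path object: a factorization of the diagonal X → X × X as a weak equivalence X → PX followed by a fibration PX → X × X. Then Brown's factorization lemma holds: every morphism f : X → Y of C factors as f = p ∘ i, where p is a fibration and i is a weak equivalence which admits a retraction by a trivial fibration (i.e. there is a trivial fibration q with q ∘ i = id). -/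

import Mathlib

open CategoryTheory CategoryTheory.Limits

/-- Brown's factorization lemma in a category of fibrant objects. -/
theorem stmt15 {C : Type*} [Category C] [HasTerminal C] [HasBinaryProducts C]
    (Weq Fib : MorphismProperty C)
    -- weak equivalences contain isomorphisms and satisfy 2-out-of-3
    (Weq_iso : ∀ {X Y : C} (f : X ⟶ Y), IsIso f → Weq f)
    (Weq_comp : ∀ {X Y Z : C} (f : X ⟶ Y) (g : Y ⟶ Z), Weq f → Weq g → Weq (f ≫ g))
    (Weq_cancelLeft : ∀ {X Y Z : C} (f : X ⟶ Y) (g : Y ⟶ Z), Weq f → Weq (f ≫ g) → Weq g)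
    (Weq_cancelRight : ∀ {X Y Z : C} (f : X ⟶ Y) (g : Y ⟶ Z), Weq g → Weq (f ≫ g) → Weq f)
    -- fibrations contain isomorphisms and are closed under composition
    (Fib_iso : ∀ {X Y : C} (f : X ⟶ Y), IsIso f → Fib f)
    (Fib_comp : ∀ {X Y Z : C} (f : X ⟶ Y) (g : Y ⟶ Z), Fib f → Fib g → Fib (f ≫ g))
    -- pullbacks of fibrations along arbitrary morphisms exist
    (pb_exists : ∀ {a b x : C} (m : a ⟶ b) (h : x ⟶ b), Fib m →
      ∃ (P : C) (p₁ : P ⟶ x) (p₂ : P ⟶ a), IsPullback p₁ p₂ h m)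
    -- fibrations are stable under base change
    (Fib_stab : ∀ {a b x P : C} (m : a ⟶ b) (h : x ⟶ b) (p₁ : P ⟶ x) (p₂ : P ⟶ a),
      IsPullback p₁ p₂ h m → Fib m → Fib p₁)
    -- trivial fibrations are stable under base change
    (Triv_stab : ∀ {a b x P : C} (m : a ⟶ b) (h : x ⟶ b) (p₁ : P ⟶ x) (p₂ : P ⟶ a),
      IsPullback p₁ p₂ h m → Fib m → Weq m → Fib p₁ ∧ Weq p₁)
    -- every object is fibrant
    (fibrant : ∀ X : C, Fib (terminal.from X))
    -- every object has a path object
    (path : ∀ X : C, ∃ (PX : C) (ip : X ⟶ PX) (q : PX ⟶ X ⨯ X),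
      Weq ip ∧ Fib q ∧ ip ≫ q = diag X) :
    -- conclusion: every morphism factors as a weak equivalence (with a retraction
    -- by a trivial fibration) followed by a fibration
    ∀ {X Y : C} (f : X ⟶ Y), ∃ (E : C) (i : X ⟶ E) (p : E ⟶ Y),
      Fib p ∧ Weq i ∧ (∃ q : E ⟶ X, Fib q ∧ Weq q ∧ i ≫ q = 𝟙 X) ∧ i ≫ p = f := by
  intro X Y f
  obtain ⟨PY, ip, q, hip, hq, hdiag⟩ := path Y
  -- fst and snd from the product Y ⨯ Y are fibrations
  have prodPB : IsPullback (Limits.prod.fst : Y ⨯ Y ⟶ Y) Limits.prod.snd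
      (terminal.from Y) (terminal.from Y) := IsPullback.of_hasBinaryProduct' Y Y
  have hfst : Fib (Limits.prod.fst : Y ⨯ Y ⟶ Y) :=
    Fib_stab _ _ _ _ prodPB (fibrant Y)
  have hsnd : Fib (Limits.prod.snd : Y ⨯ Y ⟶ Y) :=
    Fib_stab _ _ _ _ prodPB.flip (fibrant Y)
  set q₁ : PY ⟶ Y := q ≫ Limits.prod.fst with hq₁def
  set q₂ : PY ⟶ Y := q ≫ Limits.prod.snd with hq₂def
  have hq₁ : Fib q₁ := Fib_comp _ _ hq hfst
  have hq₂ : Fib q₂ := Fib_comp _ _ hq hsnd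
  have hipq₁ : ip ≫ q₁ = 𝟙 Y := by
    rw [hq₁def, ← Category.assoc, hdiag]; simp [diag, prod.lift_fst, prod.lift_snd]
  have hipq₂ : ip ≫ q₂ = 𝟙 Y := by
    rw [hq₂def, ← Category.assoc, hdiag]; simp [diag, prod.lift_fst, prod.lift_snd]
  -- q₁ is a trivial fibration
  have hq₁w : Weq q₁ := Weq_cancelLeft ip q₁ hip (hipq₁ ▸ Weq_iso _ inferInstance)
  -- the pullback E = X ×_Y PY along q₁
  obtain ⟨E, p₁, p₂, hPB⟩ := pb_exists q₁ f hq₁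
  -- i : X ⟶ E
  have hicomm : 𝟙 X ≫ f = (f ≫ ip) ≫ q₁ := by
    rw [Category.assoc, hipq₁]; simp
  refine ⟨E, hPB.lift (𝟙 X) (f ≫ ip) hicomm, p₂ ≫ q₂, ?_, ?_, ?_, ?_⟩
  · -- Fib (p₂ ≫ q₂): p₂ ≫ q₂ = (lift p₁ (p₂ ≫ q₂)) ≫ snd where the lift
    -- is a base change of q along prod.map f (𝟙 Y), followed by snd : X ⨯ Y ⟶ Y
    have hPB2 : IsPullback (Limits.prod.lift p₁ (p₂ ≫ q₂)) p₂
        (Limits.prod.map f (𝟙 Y)) q := by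
      refine IsPullback.of_isLimit' ⟨?_⟩ ?_
      · ext <;> simp [hq₂def, ← hPB.w, hq₁def, prod.lift_fst, prod.lift_snd] <;> exact hPB.w
      · refine PullbackCone.IsLimit.mk _ (fun s => hPB.lift (s.fst ≫ Limits.prod.fst)
          s.snd ?_) (fun s => ?_) (fun s => ?_) (fun s m hm₁ hm₂ => ?_)
        · simpa [hq₁def] using s.condition =≫ Limits.prod.fst
        · have h2 : s.fst ≫ Limits.prod.snd = s.snd ≫ q₂ := by
            simpa [hq₂def] using s.condition =≫ Limits.prod.snd
        -- now compute
          ext <;> simp [h2, prod.lift_fst, prod.lift_snd]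
        · simp
        · apply hPB.hom_ext
          · have := hm₁ =≫ Limits.prod.fst
            simpa [prod.lift_fst, prod.lift_snd] using this
          · simpa using hm₂
    have hlift : Fib (Limits.prod.lift p₁ (p₂ ≫ q₂)) := Fib_stab _ _ _ _ hPB2 hq
    have hsndXY : Fib (Limits.prod.snd : X ⨯ Y ⟶ Y) :=
      Fib_stab _ _ _ _ (IsPullback.of_hasBinaryProduct' X Y).flip (fibrant X)
    have : (Limits.prod.lift p₁ (p₂ ≫ q₂)) ≫ Limits.prod.snd = p₂ ≫ q₂ := by simp [prod.lift_fst, prod.lift_snd]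
    rw [← this]
    exact Fib_comp _ _ hlift hsndXY
  · -- Weq i
    have hFW : Fib p₁ ∧ Weq p₁ := Triv_stab _ _ _ _ hPB hq₁ hq₁w
    have hid : Weq (hPB.lift (𝟙 X) (f ≫ ip) hicomm ≫ p₁) := by
      rw [hPB.lift_fst]; exact Weq_iso _ inferInstance
    exact Weq_cancelRight _ p₁ hFW.2 hid
  · -- retraction
    have hFW : Fib p₁ ∧ Weq p₁ := Triv_stab _ _ _ _ hPB hq₁ hq₁w
    exact ⟨p₁, hFW.1, hFW.2, hPB.lift_fst _ _ _⟩
  · -- i ≫ p = f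
    rw [← Category.assoc, hPB.lift_snd, Category.assoc, hipq₂, Category.comp_id]
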